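/- Let n ≥ 2 and let (p_x, p_y) be the dessin K_n on (ZMod n) × (ZMod n), with p_z := p_x⁻¹ ∘ p_y⁻¹. Then each of p_x, p_y and p_z has exactly n orbits on (ZMod n) × (ZMod n), each orbit of cardinality n; consequently the Euler-formula genus g(K_n) = (2 + n² − c(p_x) − c(p_y) − c(p_z))/2 equals (n² − 3n + 2)/2. -/

import Mathlib

/-- `p_x (k, l) = (k + 1, l)`. -/
def Kx (n : ℕ) : Equiv.Perm (ZMod n × ZMod n) :=
  Equiv.prodCongr (Equiv.addRight (1 : ZMod n)) (Equiv.refl (ZMod n))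

/-- `p_y (k, l) = (k, l + 1)`. -/
def Ky (n : ℕ) : Equiv.Perm (ZMod n × ZMod n) :=
  Equiv.prodCongr (Equiv.refl (ZMod n)) (Equiv.addRight (1 : ZMod n))

/-- `c(σ)`: the number of orbits of the cyclic group generated by `σ`. -/
noncomputable def cyc {S : Type*} (σ : Equiv.Perm S) : ℕ :=
  Nat.card (MulAction.orbitRel.Quotient (Subgroup.zpowers σ) S)

lemma orbit_card_eq {n : ℕ} [NeZero n] {S : Type*} (σ : Equiv.Perm S) (p : S)
    (g : ZMod n → S) (hg : Function.Injective g)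
    (h : ∀ m : ℤ, (σ ^ m) p = g (m : ZMod n)) :
    Nat.card (MulAction.orbit (Subgroup.zpowers σ) p) = n := by
  have horb : MulAction.orbit (Subgroup.zpowers σ) p = Set.range g := by
    ext x
    constructor
    · rintro ⟨⟨u, m, rfl⟩, rfl⟩
      exact ⟨(m : ZMod n), (h m).symm⟩
    · rintro ⟨j, rfl⟩
      refine ⟨⟨σ ^ (j.val : ℤ), ⟨(j.val : ℤ), rfl⟩⟩, ?_⟩
      show (σ ^ (j.val : ℤ)) p = g j
      rw [h]
      congr 1
      simp [ZMod.natCast_val]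
  rw [horb, Nat.card_range_of_injective hg, Nat.card_zmod]

lemma cyc_eq {n : ℕ} [NeZero n] (σ : Equiv.Perm (ZMod n × ZMod n))
    (h : ∀ ω : MulAction.orbitRel.Quotient (Subgroup.zpowers σ) (ZMod n × ZMod n),
      Nat.card ω.orbit = n) : cyc σ = n := by
  classical
  have e := MulAction.selfEquivSigmaOrbits' (Subgroup.zpowers σ) (ZMod n × ZMod n)
  have hcard : Nat.card (ZMod n × ZMod n) = cyc σ * n := by
    rw [Nat.card_congr e]
    have hfin : Finite (MulAction.orbitRel.Quotient (Subgroup.zpowers σ) (ZMod n × ZMod n)) :=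
      Quotient.finite _
    have := Fintype.ofFinite (MulAction.orbitRel.Quotient (Subgroup.zpowers σ) (ZMod n × ZMod n))
    rw [Nat.card_eq_fintype_card, Fintype.card_sigma]
    simp_rw [← Nat.card_eq_fintype_card, h]
    rw [Finset.sum_const, smul_eq_mul, cyc, Nat.card_eq_fintype_card, Finset.card_univ]
  have hn2 : Nat.card (ZMod n × ZMod n) = n * n := by
    simp [Nat.card_prod, Nat.card_zmod]
  have hnpos : 0 < n := Nat.pos_of_ne_zero (NeZero.ne n)
  have : cyc σ * n = n * n := by rw [← hcard, hn2]
  exact Nat.eq_of_mul_eq_mul_right hnpos this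

lemma Kx_inv_apply {n : ℕ} (q : ZMod n × ZMod n) : (Kx n)⁻¹ q = (q.1 - 1, q.2) := by
  apply (Kx n).injective
  simp [Kx]
  ext <;> simp

lemma Ky_inv_apply {n : ℕ} (q : ZMod n × ZMod n) : (Ky n)⁻¹ q = (q.1, q.2 - 1) := by
  apply (Ky n).injective
  simp [Ky]
  ext <;> simp

lemma Kx_zpow {n : ℕ} (m : ℤ) : ∀ q : ZMod n × ZMod n,
    ((Kx n) ^ m) q = (q.1 + m, q.2) := by
  induction m using Int.induction_on with
  | zero => simp
  | succ k ih =>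
    intro q
    rw [zpow_add_one, Equiv.Perm.mul_apply, ih ((Kx n) q)]
    simp only [Kx, Equiv.prodCongr_apply, Prod.map, Equiv.coe_addRight, Equiv.refl_apply,
      Prod.mk.injEq]
    push_cast
    simp only [and_true, true_and]
    ring
  | pred k ih =>
    intro q
    rw [zpow_sub_one, Equiv.Perm.mul_apply, ih ((Kx n)⁻¹ q), Kx_inv_apply]
    simp only [Prod.mk.injEq]
    push_cast
    simp only [and_true, true_and]
    ring

lemma Ky_zpow {n : ℕ} (m : ℤ) : ∀ q : ZMod n × ZMod n,
    ((Ky n) ^ m) q = (q.1, q.2 + m) := by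
  induction m using Int.induction_on with
  | zero => simp
  | succ k ih =>
    intro q
    rw [zpow_add_one, Equiv.Perm.mul_apply, ih ((Ky n) q)]
    simp only [Ky, Equiv.prodCongr_apply, Prod.map, Equiv.coe_addRight, Equiv.refl_apply,
      Prod.mk.injEq]
    push_cast
    simp only [and_true, true_and]
    ring
  | pred k ih =>
    intro q
    rw [zpow_sub_one, Equiv.Perm.mul_apply, ih ((Ky n)⁻¹ q), Ky_inv_apply]
    simp only [Prod.mk.injEq]
    push_cast
    simp only [and_true, true_and]
    ring

/-- Each of `p_x`, `p_y`, `p_z` of the dessin `K_n` has exactly `n` orbits, each of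
cardinality `n`; consequently the Euler-formula genus of `K_n` is `(n² − 3n + 2)/2`. -/
theorem Kn_genus (n : ℕ) (hn : 2 ≤ n) (pz : Equiv.Perm (ZMod n × ZMod n))
    (hpz : pz = (Kx n)⁻¹ * (Ky n)⁻¹) :
    (cyc (Kx n) = n ∧ cyc (Ky n) = n ∧ cyc pz = n) ∧
    (∀ σ ∈ ({Kx n, Ky n, pz} : Set (Equiv.Perm (ZMod n × ZMod n))),
      ∀ ω : MulAction.orbitRel.Quotient (Subgroup.zpowers σ) (ZMod n × ZMod n),
        Nat.card ω.orbit = n) ∧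
    (2 + (n : ℚ) ^ 2 - cyc (Kx n) - cyc (Ky n) - cyc pz) / 2
      = ((n : ℚ) ^ 2 - 3 * n + 2) / 2 := by
  have : NeZero n := ⟨by omega⟩
  have hpz_zpow : ∀ (m : ℤ) (q : ZMod n × ZMod n), (pz ^ m) q = (q.1 - m, q.2 - m) := by
    have hpzapp : ∀ q : ZMod n × ZMod n, pz q = (q.1 - 1, q.2 - 1) := by
      intro q
      rw [hpz, Equiv.Perm.mul_apply, Ky_inv_apply, Kx_inv_apply]
    intro m
    induction m using Int.induction_on with
    | zero => simp
    | succ k ih =>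
      intro q
      rw [zpow_add_one, Equiv.Perm.mul_apply, ih (pz q), hpzapp]
      simp only [Prod.mk.injEq]
      push_cast
      constructor <;> ring_nf
    | pred k ih =>
      intro q
      rw [zpow_sub_one, Equiv.Perm.mul_apply, ih (pz⁻¹ q)]
      have : pz⁻¹ q = (q.1 + 1, q.2 + 1) := by
        apply pz.injective
        rw [Equiv.Perm.coe_inv, Equiv.apply_symm_apply, hpzapp]
        simp
      rw [this]
      simp only [Prod.mk.injEq]
      push_cast
      constructor <;> ring_nf
  -- orbit cardinalities
  have horbx : ∀ p : ZMod n × ZMod n,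
      Nat.card (MulAction.orbit (Subgroup.zpowers (Kx n)) p) = n := by
    intro p
    refine orbit_card_eq (Kx n) p (fun j => (p.1 + j, p.2)) ?_ ?_
    · intro a b hab
      simpa using congrArg Prod.fst hab
    · intro m; rw [Kx_zpow]
  have horby : ∀ p : ZMod n × ZMod n,
      Nat.card (MulAction.orbit (Subgroup.zpowers (Ky n)) p) = n := by
    intro p
    refine orbit_card_eq (Ky n) p (fun j => (p.1, p.2 + j)) ?_ ?_
    · intro a b hab
      simpa using congrArg Prod.snd hab
    · intro m; rw [Ky_zpow]
  have horbz : ∀ p : ZMod n × ZMod n,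
      Nat.card (MulAction.orbit (Subgroup.zpowers pz) p) = n := by
    intro p
    refine orbit_card_eq pz p (fun j => (p.1 - j, p.2 - j)) ?_ ?_
    · intro a b hab
      have := congrArg Prod.fst hab
      exact sub_right_inj.mp this
    · intro m; rw [hpz_zpow]
  -- orbits of quotient elements
  have hωx : ∀ ω : MulAction.orbitRel.Quotient (Subgroup.zpowers (Kx n)) (ZMod n × ZMod n),
      Nat.card ω.orbit = n := by
    intro ω
    induction ω using Quotient.inductionOn with
    | h p => rw [MulAction.orbitRel.Quotient.orbit_mk]; exact horbx p
  have hωy : ∀ ω : MulAction.orbitRel.Quotient (Subgroup.zpowers (Ky n)) (ZMod n × ZMod n),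
      Nat.card ω.orbit = n := by
    intro ω
    induction ω using Quotient.inductionOn with
    | h p => rw [MulAction.orbitRel.Quotient.orbit_mk]; exact horby p
  have hωz : ∀ ω : MulAction.orbitRel.Quotient (Subgroup.zpowers pz) (ZMod n × ZMod n),
      Nat.card ω.orbit = n := by
    intro ω
    induction ω using Quotient.inductionOn with
    | h p => rw [MulAction.orbitRel.Quotient.orbit_mk]; exact horbz p
  have hcx : cyc (Kx n) = n := cyc_eq _ hωx
  have hcy : cyc (Ky n) = n := cyc_eq _ hωy
  have hcz : cyc pz = n := cyc_eq _ hωz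
  refine ⟨⟨hcx, hcy, hcz⟩, ?_, ?_⟩
  · intro σ hσ
    rcases hσ with h | h | h
    · subst h; exact hωx
    · subst h; exact hωy
    · rw [Set.mem_singleton_iff] at h; subst h; exact hωz
  · rw [hcx, hcy, hcz]
    ring
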